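/- Let X be a real random variable and let γ ∈ ℝ \ {0}, δ ∈ ℝ, and set Y = γX + δ. If γ > 0 and (α, β) ∈ D_X, then G_Y(α, β) = γ · G_X(α, β); if γ < 0 and (β, α) ∈ D_X, then G_Y(α, β) = |γ| · G_X(β, α). -/

import Mathlib

open MeasureTheory ProbabilityTheory Set

/-- The (essential) support interval of a CDF `F`: the set where `0 < F x < 1`,
which coincides (up to endpoints) with the interval `(l, r)` where
`l = inf {x : F x > 0}` and `r = sup {x : 1 - F x > 0}`. -/
def cigfSupport (F : ℝ → ℝ) : Set ℝ := {x | 0 < F x ∧ F x < 1}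

/-- The cumulative information generating function
`G_X(α, β) = ∫_l^r F(x)^α (1 - F(x))^β dx`. -/
noncomputable def cigf (F : ℝ → ℝ) (α β : ℝ) : ℝ :=
  ∫ x in cigfSupport F, F x ^ α * (1 - F x) ^ β

/-- `(α, β) ∈ D_X`, i.e. `G_X(α, β) < ∞`. -/
def memD (F : ℝ → ℝ) (α β : ℝ) : Prop :=
  IntegrableOn (fun x => F x ^ α * (1 - F x) ^ β) (cigfSupport F)

/-- The CDF of a random variable `X` under the probability measure `P`. -/
noncomputable def rvCDF {Ω : Type*} [MeasurableSpace Ω] (P : Measure Ω) (X : Ω → ℝ) (x : ℝ) : ℝ :=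
  (P {ω | X ω ≤ x}).toReal

/-- The CDF of a probability measure on `ℝ`. -/
noncomputable def cdfOf (μ : Measure ℝ) (x : ℝ) : ℝ := (μ (Iic x)).toReal

lemma rvCDF_mono {Ω : Type*} [MeasurableSpace Ω] (P : Measure Ω) [IsProbabilityMeasure P]
    (X : Ω → ℝ) : Monotone (rvCDF P X) := fun a b hab =>
  ENNReal.toReal_mono (measure_ne_top _ _) (measure_mono fun ω h => le_trans h hab)

lemma cigfSupport_measurableSet {F : ℝ → ℝ} (hF : Monotone F) :
    MeasurableSet (cigfSupport F) :=
  hF.measurable measurableSet_Ioo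

lemma integral_comp_affine (g : ℝ → ℝ) (γ δ : ℝ) :
    ∫ x : ℝ, g ((x - δ) / γ) = |γ| * ∫ x : ℝ, g x := by
  have h1 : ∫ x : ℝ, g ((x - δ) / γ) = ∫ x : ℝ, (fun y => g (y / γ)) (x + -δ) := by
    simp [sub_eq_add_neg]
  rw [h1, integral_add_right_eq_self (fun y => g (y / γ)) (-δ),
    MeasureTheory.Measure.integral_comp_div g γ, smul_eq_mul]

/-- For `Y = γ X + δ`: if `γ > 0` and `(α, β) ∈ D_X` then
`G_Y(α, β) = γ G_X(α, β)`; if `γ < 0` and `(β, α) ∈ D_X` then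
`G_Y(α, β) = |γ| G_X(β, α)`. -/
theorem stmt0 {Ω : Type*} [MeasurableSpace Ω] (P : Measure Ω) [IsProbabilityMeasure P]
    (X : Ω → ℝ) (hX : Measurable X) (γ δ : ℝ) (hγ : γ ≠ 0) (α β : ℝ) :
    (0 < γ → memD (rvCDF P X) α β →
      cigf (rvCDF P fun ω => γ * X ω + δ) α β = γ * cigf (rvCDF P X) α β) ∧
    (γ < 0 → memD (rvCDF P X) β α →
      cigf (rvCDF P fun ω => γ * X ω + δ) α β = |γ| * cigf (rvCDF P X) β α) := by
  have hFXm : MeasurableSet (cigfSupport (rvCDF P X)) :=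
    cigfSupport_measurableSet (rvCDF_mono P X)
  have hFYm : MeasurableSet (cigfSupport (rvCDF P fun ω => γ * X ω + δ)) :=
    cigfSupport_measurableSet (rvCDF_mono P _)
  constructor
  · -- case γ > 0
    intro hγpos _
    have hFY : ∀ x, rvCDF P (fun ω => γ * X ω + δ) x = rvCDF P X ((x - δ) / γ) := by
      intro x
      have hsets : {ω | γ * X ω + δ ≤ x} = {ω | X ω ≤ (x - δ) / γ} := by
        ext ω
        simp only [mem_setOf_eq]
        rw [le_div_iff₀ hγpos]
        constructor <;> intro h <;> nlinarith
      unfold rvCDF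
      rw [hsets]
    have key : ∀ x : ℝ,
        (cigfSupport (rvCDF P fun ω => γ * X ω + δ)).indicator
          (fun x => rvCDF P (fun ω => γ * X ω + δ) x ^ α *
            (1 - rvCDF P (fun ω => γ * X ω + δ) x) ^ β) x
        = (cigfSupport (rvCDF P X)).indicator
            (fun t => rvCDF P X t ^ α * (1 - rvCDF P X t) ^ β) ((x - δ) / γ) := by
      intro x
      simp only [indicator_apply, cigfSupport, mem_setOf_eq, hFY]
    calc cigf (rvCDF P fun ω => γ * X ω + δ) α β
        = ∫ x : ℝ, (cigfSupport (rvCDF P fun ω => γ * X ω + δ)).indicator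
            (fun x => rvCDF P (fun ω => γ * X ω + δ) x ^ α *
              (1 - rvCDF P (fun ω => γ * X ω + δ) x) ^ β) x :=
          (integral_indicator hFYm).symm
      _ = ∫ x : ℝ, (cigfSupport (rvCDF P X)).indicator
            (fun t => rvCDF P X t ^ α * (1 - rvCDF P X t) ^ β) ((x - δ) / γ) := by
          exact integral_congr_ae (Filter.Eventually.of_forall key)
      _ = |γ| * ∫ t : ℝ, (cigfSupport (rvCDF P X)).indicator
            (fun t => rvCDF P X t ^ α * (1 - rvCDF P X t) ^ β) t :=
          integral_comp_affine _ γ δ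
      _ = γ * cigf (rvCDF P X) α β := by
          rw [integral_indicator hFXm, abs_of_pos hγpos]; rfl
  · -- case γ < 0
    intro hγneg _
    have hμ : IsProbabilityMeasure (P.map X) := Measure.isProbabilityMeasure_map hX.aemeasurable
    -- countably many atoms
    have hScount : {t : ℝ | 0 < (P.map X) {t}}.Countable :=
      Measure.countable_meas_pos_of_disjoint_iUnion₀ (μ := P.map X) (As := fun t : ℝ => {t})
        (fun t => (measurableSet_singleton t).nullMeasurableSet)
        (fun t s hts => (disjoint_singleton.mpr hts).aedisjoint)
    set B : Set ℝ := (fun t => γ * t + δ) '' {t : ℝ | 0 < (P.map X) {t}} with hBdef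
    have hB0 : volume B = 0 := (hScount.image _).measure_zero _
    -- the CDF of Y in terms of the survival function of X
    have hFY : ∀ x, rvCDF P (fun ω => γ * X ω + δ) x
        = (P {ω | (x - δ) / γ ≤ X ω}).toReal := by
      intro x
      have hsets : {ω | γ * X ω + δ ≤ x} = {ω | (x - δ) / γ ≤ X ω} := by
        ext ω
        simp only [mem_setOf_eq]
        rw [div_le_iff_of_neg hγneg]
        constructor <;> intro h <;> nlinarith
      unfold rvCDF
      rw [hsets]
    -- at non-atoms, the survival function is 1 - F
    have hG : ∀ t : ℝ, P {ω | X ω = t} = 0 →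
        (P {ω | t ≤ X ω}).toReal = 1 - rvCDF P X t := by
      intro t ht0
      have hset : {ω | t ≤ X ω} = {ω | X ω = t} ∪ {ω | X ω ≤ t}ᶜ := by
        ext ω
        simp only [mem_setOf_eq, mem_union, mem_compl_iff, not_le]
        constructor
        · intro h
          rcases eq_or_lt_of_le h with h' | h'
          · exact Or.inl h'.symm
          · exact Or.inr h'
        · rintro (h | h)
          · exact h.ge
          · exact h.le
      have hle1 : P {ω | t ≤ X ω} ≤ P ({ω | X ω ≤ t}ᶜ) := by
        calc P {ω | t ≤ X ω} = P ({ω | X ω = t} ∪ {ω | X ω ≤ t}ᶜ) := by rw [hset]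
          _ ≤ P {ω | X ω = t} + P ({ω | X ω ≤ t}ᶜ) := measure_union_le _ _
          _ = P ({ω | X ω ≤ t}ᶜ) := by rw [ht0, zero_add]
      have hle2 : P ({ω | X ω ≤ t}ᶜ) ≤ P {ω | t ≤ X ω} :=
        measure_mono fun ω (h : ¬ X ω ≤ t) => le_of_lt (lt_of_not_ge h)
      have hmeas : MeasurableSet {ω | X ω ≤ t} := hX measurableSet_Iic
      rw [le_antisymm hle1 hle2, prob_compl_eq_one_sub hmeas,
        ENNReal.toReal_sub_of_le prob_le_one ENNReal.one_ne_top, ENNReal.toReal_one]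
      rfl
    -- a.e. pointwise identification of the indicator integrands
    have key : ∀ x ∉ B,
        (cigfSupport (rvCDF P fun ω => γ * X ω + δ)).indicator
          (fun x => rvCDF P (fun ω => γ * X ω + δ) x ^ α *
            (1 - rvCDF P (fun ω => γ * X ω + δ) x) ^ β) x
        = (cigfSupport (rvCDF P X)).indicator
            (fun t => rvCDF P X t ^ β * (1 - rvCDF P X t) ^ α) ((x - δ) / γ) := by
      intro x hx
      set t := (x - δ) / γ with htdef
      have hatom : P {ω | X ω = t} = 0 := by
        by_contra hne
        apply hx
        refine ⟨t, ?_, by show γ * ((x - δ) / γ) + δ = x; field_simp; ring⟩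
        have : (P.map X) {t} = P {ω | X ω = t} := by
          rw [Measure.map_apply hX (measurableSet_singleton t)]
          rfl
        simp only [mem_setOf_eq, this]
        exact pos_iff_ne_zero.mpr hne
      have hFYx : rvCDF P (fun ω => γ * X ω + δ) x = 1 - rvCDF P X t := by
        rw [hFY x, hG t hatom]
      simp only [indicator_apply, cigfSupport, mem_setOf_eq, hFYx]
      by_cases hmem : 0 < rvCDF P X t ∧ rvCDF P X t < 1
      · rw [if_pos (by constructor <;> linarith [hmem.1, hmem.2]), if_pos hmem,
          sub_sub_cancel]
        ring
      · rw [if_neg (by intro h; exact hmem ⟨by linarith [h.2], by linarith [h.1]⟩),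
          if_neg hmem]
    have hae : (fun x : ℝ => (cigfSupport (rvCDF P fun ω => γ * X ω + δ)).indicator
          (fun x => rvCDF P (fun ω => γ * X ω + δ) x ^ α *
            (1 - rvCDF P (fun ω => γ * X ω + δ) x) ^ β) x)
        =ᵐ[volume] fun x : ℝ => (cigfSupport (rvCDF P X)).indicator
            (fun t => rvCDF P X t ^ β * (1 - rvCDF P X t) ^ α) ((x - δ) / γ) := by
      refine Filter.eventuallyEq_iff_exists_mem.mpr ⟨Bᶜ, ?_, fun x hx => key x hx⟩
      rw [mem_ae_iff, compl_compl]
      exact hB0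
    calc cigf (rvCDF P fun ω => γ * X ω + δ) α β
        = ∫ x : ℝ, (cigfSupport (rvCDF P fun ω => γ * X ω + δ)).indicator
            (fun x => rvCDF P (fun ω => γ * X ω + δ) x ^ α *
              (1 - rvCDF P (fun ω => γ * X ω + δ) x) ^ β) x :=
          (integral_indicator hFYm).symm
      _ = ∫ x : ℝ, (cigfSupport (rvCDF P X)).indicator
            (fun t => rvCDF P X t ^ β * (1 - rvCDF P X t) ^ α) ((x - δ) / γ) :=
          integral_congr_ae hae
      _ = |γ| * ∫ t : ℝ, (cigfSupport (rvCDF P X)).indicator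
            (fun t => rvCDF P X t ^ β * (1 - rvCDF P X t) ^ α) t :=
          integral_comp_affine _ γ δ
      _ = |γ| * cigf (rvCDF P X) β α := by
          rw [integral_indicator hFXm]; rfl
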